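/- arXiv:2306.14825 — 3 statements merged into one kernel-verified Lean document; each statement's English description precedes it below -/
import Mathlib

section
/- Subcritical case of Proposition 1: Let s : ℝ → ℝ → ℝ be continuous and bounded with s(0,0) = 1, let z₁, z₂ > 0, let x, y ≥ 0, and let the exponents satisfy 0 < χ < min(χ₁, χ₂). Then lim_{ε→0⁺} s̃_ε(x,y) = 1. -/
open Real MeasureTheory Filter Set Topology

/-- The rescaled Laplace transform `s̃_ε(x,y)` of the mode coupling theory. -/
noncomputable def stildeEps (s : ℝ → ℝ → ℝ) (z₁ z₂ χ χ₁ χ₂ x y ε : ℝ) : ℝ :=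
  ∫ τ in Ioi (0:ℝ),
    Real.exp (-τ) * s ((ε ^ (χ₁ - χ) * x * τ) ^ (1 / z₁)) ((ε ^ (χ₂ - χ) * y * τ) ^ (1 / z₂))

/-- Subcritical case of Proposition 1: for `0 < χ < min (χ₁, χ₂)`,
`lim_{ε→0⁺} s̃_ε(x,y) = 1`. -/
theorem prop1_subcritical (s : ℝ → ℝ → ℝ)
    (hcont : Continuous fun p : ℝ × ℝ => s p.1 p.2)
    (hbdd : ∃ C : ℝ, ∀ u v : ℝ, |s u v| ≤ C)
    (hs00 : s 0 0 = 1)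
    (z₁ z₂ : ℝ) (hz₁ : 0 < z₁) (hz₂ : 0 < z₂)
    (x y : ℝ) (hx : 0 ≤ x) (hy : 0 ≤ y)
    (χ χ₁ χ₂ : ℝ) (hχ : 0 < χ) (hχ₁ : χ < χ₁) (hχ₂ : χ < χ₂) :
    Tendsto (fun ε : ℝ => stildeEps s z₁ z₂ χ χ₁ χ₂ x y ε) (𝓝[>] 0) (𝓝 1) := by
  obtain ⟨C, hC⟩ := hbdd
  have key : Tendsto (fun ε : ℝ => stildeEps s z₁ z₂ χ χ₁ χ₂ x y ε) (𝓝[>] 0)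
      (𝓝 (∫ τ in Ioi (0:ℝ), Real.exp (-τ))) := by
    apply tendsto_integral_filter_of_dominated_convergence
      (fun τ => C * Real.exp (-τ))
    · filter_upwards with ε
      apply Measurable.aestronglyMeasurable
      have hmeas : ∀ c : ℝ, ∀ p : ℝ, 0 ≤ p → Measurable fun τ : ℝ => (c * τ) ^ p :=
        fun c p hp => ((continuous_const.mul continuous_id).rpow_const
          (fun _ => Or.inr hp)).measurable
      exact (measurable_exp.comp measurable_neg).mul
        (hcont.measurable.comp ((hmeas _ _ (by positivity)).prodMk (hmeas _ _ (by positivity))))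
    · filter_upwards with ε
      filter_upwards with τ
      rw [norm_mul, Real.norm_eq_abs, Real.norm_eq_abs, abs_exp, mul_comm]
      exact mul_le_mul_of_nonneg_right (hC _ _) (Real.exp_pos _).le
    · exact (exp_neg_integrableOn_Ioi 0 one_pos).const_mul C |>.congr
        (Filter.EventuallyEq.of_eq (by funext t; norm_num))
    · filter_upwards with τ
      have hpow : ∀ (χ' : ℝ), χ < χ' → ∀ w : ℝ, 0 ≤ w → ∀ z : ℝ, 0 < z →
          Tendsto (fun ε : ℝ => (ε ^ (χ' - χ) * w * τ) ^ (1 / z)) (𝓝[>] 0) (𝓝 0) := by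
        intro χ' hχ' w hw z hz
        have h1 : Tendsto (fun ε : ℝ => ε ^ (χ' - χ) * w * τ) (𝓝[>] 0) (𝓝 0) := by
          have h0 : Tendsto (fun ε : ℝ => ε ^ (χ' - χ)) (𝓝[>] 0) (𝓝 0) := by
            have := (Real.continuousAt_rpow_const 0 (χ' - χ)
              (Or.inr (by linarith))).tendsto
            rw [Real.zero_rpow (by linarith : χ' - χ ≠ 0)] at this
            exact this.mono_left nhdsWithin_le_nhds
          simpa using (h0.mul_const w).mul_const τ
        have h2 : ContinuousAt (fun u : ℝ => u ^ (1 / z)) 0 :=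
          Real.continuousAt_rpow_const 0 (1 / z) (Or.inr (by positivity))
        have := h2.tendsto.comp h1
        rwa [Real.zero_rpow (by positivity : (1:ℝ) / z ≠ 0)] at this
      have hs : Tendsto (fun ε : ℝ =>
          s ((ε ^ (χ₁ - χ) * x * τ) ^ (1 / z₁)) ((ε ^ (χ₂ - χ) * y * τ) ^ (1 / z₂)))
          (𝓝[>] 0) (𝓝 (s 0 0)) :=
        (hcont.tendsto (0, 0)).comp
          (((hpow χ₁ hχ₁ x hx z₁ hz₁).prodMk_nhds (hpow χ₂ hχ₂ y hy z₂ hz₂)))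
      have := hs.const_mul (Real.exp (-τ))
      rw [hs00, mul_one] at this
      exact this
  rwa [integral_exp_neg_Ioi_zero] at key
end

section
/- Critical case of Proposition 1 with χ₁ < χ₂: Let s : ℝ → ℝ → ℝ be continuous and bounded, let z₁, z₂ > 0, let x, y ≥ 0, and suppose 0 < χ = χ₁ < χ₂. Then lim_{ε→0⁺} s̃_ε(x,y) = s̃*(x,0). -/
open Real MeasureTheory Filter Set Topology

/-- The limiting Laplace transform `s̃*(x,y)`. -/
noncomputable def stildeStar (s : ℝ → ℝ → ℝ) (z₁ z₂ x y : ℝ) : ℝ :=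
  ∫ τ in Ioi (0:ℝ), Real.exp (-τ) * s ((x * τ) ^ (1 / z₁)) ((y * τ) ^ (1 / z₂))

lemma continuous_rpow_const' {p : ℝ} (hp : 0 < p) :
    Continuous fun u : ℝ => u ^ p := by
  rw [continuous_iff_continuousAt]
  intro u
  exact Real.continuousAt_rpow_const u p (Or.inr hp.le)

/-- Critical case of Proposition 1 with `χ₁ < χ₂`: for `0 < χ = χ₁ < χ₂`,
`lim_{ε→0⁺} s̃_ε(x,y) = s̃*(x,0)`. -/
theorem prop1_critical_lt (s : ℝ → ℝ → ℝ)
    (hcont : Continuous fun p : ℝ × ℝ => s p.1 p.2)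
    (hbdd : ∃ C : ℝ, ∀ u v : ℝ, |s u v| ≤ C)
    (z₁ z₂ : ℝ) (hz₁ : 0 < z₁) (hz₂ : 0 < z₂)
    (x y : ℝ) (hx : 0 ≤ x) (hy : 0 ≤ y)
    (χ χ₁ χ₂ : ℝ) (hχ : 0 < χ) (heq : χ = χ₁) (hlt : χ₁ < χ₂) :
    Tendsto (fun ε : ℝ => stildeEps s z₁ z₂ χ χ₁ χ₂ x y ε) (𝓝[>] 0)
      (𝓝 (stildeStar s z₁ z₂ x 0)) := by
  obtain ⟨C, hC⟩ := hbdd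
  have h0 : χ₁ - χ = 0 := by rw [← heq]; ring
  have hδ : 0 < χ₂ - χ := by rw [heq]; linarith
  have hz₁' : 0 < 1 / z₁ := by positivity
  have hz₂' : 0 < 1 / z₂ := by positivity
  simp only [stildeEps, stildeStar, h0, Real.rpow_zero, one_mul]
  apply MeasureTheory.tendsto_integral_filter_of_dominated_convergence
    (fun τ => C * Real.exp (-τ))
  · -- measurability
    filter_upwards with ε
    apply Continuous.aestronglyMeasurable
    exact (Real.continuous_exp.comp continuous_neg).mul
      (hcont.comp ((((continuous_rpow_const' hz₁').comp
        ((continuous_const.mul continuous_id))).prodMk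
        ((continuous_rpow_const' hz₂').comp
        ((continuous_const.mul continuous_id))))))
  · -- bound
    filter_upwards with ε
    filter_upwards with τ
    rw [Real.norm_eq_abs, abs_mul, Real.abs_exp]
    calc Real.exp (-τ) * |s _ _| ≤ Real.exp (-τ) * C :=
          mul_le_mul_of_nonneg_left (hC _ _) (Real.exp_pos _).le
      _ = C * Real.exp (-τ) := mul_comm _ _
  · -- integrability of bound
    have := (exp_neg_integrableOn_Ioi 0 one_pos).const_mul C
    simpa using this
  · -- pointwise limit
    filter_upwards with τ
    have harg : Tendsto (fun ε : ℝ => (ε ^ (χ₂ - χ) * y * τ) ^ (1 / z₂)) (𝓝[>] 0)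
        (𝓝 ((0 * τ) ^ (1 / z₂))) := by
      have h1 : Tendsto (fun ε : ℝ => ε ^ (χ₂ - χ)) (𝓝[>] 0) (𝓝 0) := by
        have := (Real.continuousAt_rpow_const 0 (χ₂ - χ) (Or.inr hδ.le))
        have h := this.tendsto
        rw [Real.zero_rpow hδ.ne'] at h
        exact h.mono_left nhdsWithin_le_nhds
      have h2 : Tendsto (fun ε : ℝ => ε ^ (χ₂ - χ) * y * τ) (𝓝[>] 0) (𝓝 0) := by
        have := (h1.mul_const y).mul_const τ
        simpa using this
      have h3 := ((continuous_rpow_const' hz₂').continuousAt (x := (0:ℝ))).tendsto.comp h2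
      rw [Real.zero_rpow hz₂'.ne'] at h3
      rw [zero_mul, Real.zero_rpow hz₂'.ne']
      exact h3
    exact (Tendsto.const_mul _
      ((hcont.continuousAt.tendsto).comp (tendsto_const_nhds.prodMk_nhds harg)))
end

section
/- Critical case of Proposition 1 with χ₁ > χ₂: Let s : ℝ → ℝ → ℝ be continuous and bounded, let z₁, z₂ > 0, let x, y ≥ 0, and suppose 0 < χ = χ₂ < χ₁. Then lim_{ε→0⁺} s̃_ε(x,y) = s̃*(0,y). -/
open Real MeasureTheory Filter Set Topology

lemma continuous_rpow_const_of_pos {b : ℝ} (hb : 0 < b) :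
    Continuous fun u : ℝ => u ^ b := by
  rw [continuous_iff_continuousAt]
  intro u
  exact Real.continuousAt_rpow_const u b (Or.inr hb.le)

/-- Critical case of Proposition 1 with `χ₁ > χ₂`: for `0 < χ = χ₂ < χ₁`,
`lim_{ε→0⁺} s̃_ε(x,y) = s̃*(0,y)`. -/
theorem prop1_critical_gt (s : ℝ → ℝ → ℝ)
    (hcont : Continuous fun p : ℝ × ℝ => s p.1 p.2)
    (hbdd : ∃ C : ℝ, ∀ u v : ℝ, |s u v| ≤ C)
    (z₁ z₂ : ℝ) (hz₁ : 0 < z₁) (hz₂ : 0 < z₂)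
    (x y : ℝ) (hx : 0 ≤ x) (hy : 0 ≤ y)
    (χ χ₁ χ₂ : ℝ) (hχ : 0 < χ) (heq : χ = χ₂) (hlt : χ₂ < χ₁) :
    Tendsto (fun ε : ℝ => stildeEps s z₁ z₂ χ χ₁ χ₂ x y ε) (𝓝[>] 0)
      (𝓝 (stildeStar s z₁ z₂ 0 y)) := by
  obtain ⟨C, hC⟩ := hbdd
  have hC0 : 0 ≤ C := le_trans (abs_nonneg _) (hC 0 0)
  have ha : 0 < χ₁ - χ := by linarith
  have hb₁ : 0 < 1 / z₁ := by positivity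
  have hb₂ : 0 < 1 / z₂ := by positivity
  have hsub : χ₂ - χ = 0 := by rw [heq]; ring
  -- simplify the goal
  simp only [stildeEps, stildeStar, hsub, Real.rpow_zero, one_mul, zero_mul]
  apply MeasureTheory.tendsto_integral_filter_of_dominated_convergence
    (fun τ => C * Real.exp (-τ))
  · filter_upwards with ε
    apply Continuous.aestronglyMeasurable
    apply (Real.continuous_exp.comp continuous_neg).mul
    have hpair : Continuous fun τ : ℝ =>
        (((ε ^ (χ₁ - χ) * x * τ) ^ (1 / z₁), (y * τ) ^ (1 / z₂)) : ℝ × ℝ) := by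
      apply Continuous.prodMk
      · exact (continuous_rpow_const_of_pos hb₁).comp (continuous_const.mul continuous_id)
      · exact (continuous_rpow_const_of_pos hb₂).comp (continuous_const.mul continuous_id)
    exact hcont.comp hpair
  · filter_upwards with ε
    filter_upwards with τ
    rw [norm_mul, Real.norm_eq_abs, Real.norm_eq_abs, Real.abs_exp, mul_comm]
    exact mul_le_mul_of_nonneg_right (hC _ _) (Real.exp_pos _).le
  · exact ((exp_neg_integrableOn_Ioi 0 one_pos).congr_fun
      (fun τ _ => by simp) measurableSet_Ioi).const_mul C
  · filter_upwards with τ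
    have h1 : Tendsto (fun ε : ℝ => ε ^ (χ₁ - χ)) (𝓝[>] 0) (𝓝 0) := by
      have := (Real.continuousAt_rpow_const 0 (χ₁ - χ) (Or.inr ha.le)).continuousWithinAt
        (s := Ioi (0:ℝ))
      simpa [ContinuousWithinAt, Real.zero_rpow ha.ne'] using this
    have h2 : Tendsto (fun ε : ℝ => (ε ^ (χ₁ - χ) * x * τ) ^ (1 / z₁)) (𝓝[>] 0)
        (𝓝 ((0:ℝ) ^ (1 / z₁))) := by
      have : Tendsto (fun ε : ℝ => ε ^ (χ₁ - χ) * x * τ) (𝓝[>] 0) (𝓝 0) := by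
        simpa using (h1.mul_const x).mul_const τ
      exact this.rpow_const (Or.inr hb₁.le)
    have h3 : Tendsto (fun ε : ℝ =>
        s ((ε ^ (χ₁ - χ) * x * τ) ^ (1 / z₁)) ((y * τ) ^ (1 / z₂))) (𝓝[>] 0)
        (𝓝 (s ((0:ℝ) ^ (1 / z₁)) ((y * τ) ^ (1 / z₂)))) :=
      (hcont.tendsto _).comp (h2.prodMk_nhds tendsto_const_nhds)
    exact h3.const_mul _
end
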